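/- Let X = {x_1, …, x_m} ⊆ ℝ^d be a bag of examples such that the j₀-th coordinate is identical across the bag, i.e., x_{i,j₀} = x_{1,j₀} for all i ∈ [m]. Let y_1, …, y_m ∈ ℝ be the labels of the examples and ȳ = (1/m) Σ_{i∈[m]} y_i their aggregate label. Let the loss function be ℓ(y, ŷ) = b(ŷ) − y·ŷ + c(y) with b : ℝ → ℝ differentiable, and let the model be the additive model ŷ_i = f(x_i; β) = Σ_{j∈[p]} f_j(x_{i,j}; β_j) with p = d, where β = (β_1, …, β_p) ∈ ℝ^p and each sub-model f_j(x_j; β_j) is differentiable in its parameter β_j. Then (1/m) Σ_{i∈[m]} ∂ℓ(y_i, ŷ_i)/∂β_{j₀} = (∂f_{j₀}(x_{1,j₀}; β_{j₀})/∂β_{j₀}) · ((1/m) Σ_{i∈[m]} b′(ŷ_i) − ȳ). -/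
import Mathlib


/-- **Lossless Aggregate Learning, Simplest Version.**
A bag of `m` examples in `ℝ^p` (with `p = d`) whose `j₀`-th coordinate is constant,
a scalar semilinear loss `loss (y, ŷ) = b ŷ - y * ŷ + c y`, and an additive model
`yhat i = ∑ j, f j (x i j) (β j)`.  The average over the bag of the partial derivative of
the loss with respect to `β j₀` can be computed from the aggregate label `ybar` alone. -/
theorem lossless_aggregate_learning_simplest
    {m p : ℕ} (hm : 0 < m) (j₀ : Fin p)
    (x : Fin m → Fin p → ℝ) (y : Fin m → ℝ) (β : Fin p → ℝ)
    (b b' c : ℝ → ℝ)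
    (hb : ∀ t : ℝ, HasDerivAt b (b' t) t)
    (f : Fin p → ℝ → ℝ → ℝ)
    (hf : ∀ (j : Fin p) (v : ℝ), DifferentiableAt ℝ (f j v) (β j))
    (hx : ∀ i : Fin m, x i j₀ = x ⟨0, hm⟩ j₀)
    (loss : ℝ → ℝ → ℝ)
    (hloss : ∀ z w : ℝ, loss z w = b w - z * w + c z)
    (yhat : Fin m → ℝ) (hyhat : ∀ i, yhat i = ∑ j, f j (x i j) (β j))
    (ybar : ℝ) (hybar : ybar = (1 / m : ℝ) * ∑ i, y i) :
    (1 / m : ℝ) *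
        ∑ i, deriv (fun t : ℝ =>
          loss (y i) (∑ j, f j (x i j) (Function.update β j₀ t j))) (β j₀)
      = deriv (fun t : ℝ => f j₀ (x ⟨0, hm⟩ j₀) t) (β j₀) *
          ((1 / m : ℝ) * ∑ i, b' (yhat i) - ybar) := by
  set D : ℝ := deriv (fun t : ℝ => f j₀ (x ⟨0, hm⟩ j₀) t) (β j₀) with hD
  have key : ∀ i : Fin m,
      deriv (fun t : ℝ =>
        loss (y i) (∑ j, f j (x i j) (Function.update β j₀ t j))) (β j₀)
      = D * (b' (yhat i) - y i) := by
    intro i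
    set C : ℝ := ∑ j ∈ Finset.univ.erase j₀, f j (x i j) (β j) with hC
    have hsum : ∀ t : ℝ,
        (∑ j, f j (x i j) (Function.update β j₀ t j)) = f j₀ (x i j₀) t + C := by
      intro t
      rw [← Finset.add_sum_erase _ _ (Finset.mem_univ j₀)]
      congr 1
      · simp
      · exact Finset.sum_congr rfl fun j hj => by
          rw [Function.update_of_ne (Finset.ne_of_mem_erase hj)]
    have hyhat' : yhat i = f j₀ (x i j₀) (β j₀) + C := by
      rw [hyhat i, ← hsum (β j₀)]
      exact Finset.sum_congr rfl fun j _ => by rw [Function.update_eq_self]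
    have hg : HasDerivAt (fun t => f j₀ (x i j₀) t) D (β j₀) := by
      rw [hD, hx i]
      exact (hf j₀ (x ⟨0, hm⟩ j₀)).hasDerivAt
    have hg2 : HasDerivAt (fun t => f j₀ (x i j₀) t + C) D (β j₀) := hg.add_const C
    have hb2 : HasDerivAt (fun t => b (f j₀ (x i j₀) t + C)) (b' (yhat i) * D) (β j₀) := by
      have := (hb (f j₀ (x i j₀) (β j₀) + C)).comp (β j₀) hg2
      rwa [← hyhat'] at this
    have htot : HasDerivAt (fun t =>
        b (f j₀ (x i j₀) t + C) - y i * (f j₀ (x i j₀) t + C) + c (y i))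
        (b' (yhat i) * D - y i * D) (β j₀) :=
      ((hb2.sub (hg2.const_mul (y i))).add_const (c (y i)))
    have hfun : (fun t : ℝ =>
        loss (y i) (∑ j, f j (x i j) (Function.update β j₀ t j)))
        = fun t => b (f j₀ (x i j₀) t + C) - y i * (f j₀ (x i j₀) t + C) + c (y i) := by
      funext t
      rw [hloss, hsum]
    rw [hfun, htot.deriv]
    ring
  rw [Finset.sum_congr rfl fun i _ => key i]
  simp only [Finset.mul_sum, mul_sub, Finset.sum_sub_distrib, hybar]
  ring
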